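/- Let P be a distribution on {0,1}^m and let d_E(P,U_m) denote the subexponential distance to uniform. Then d_E(P,U_m) ≤ √((ln2/2)·KL(P‖U_m)) if KL(P‖U_m) ≤ 1/(2 ln 2), and d_E(P,U_m) ≤ (ln2/2)·KL(P‖U_m) + 1/4 otherwise. -/

import Mathlib

open scoped BigOperators

/-- A probability mass function on a finite set. -/
def IsPMF {X : Type*} [Fintype X] (P : X → ℝ) : Prop :=
  (∀ x, 0 ≤ P x) ∧ ∑ x, P x = 1

/-- `f : {0,1}^m → ℝ` is a subexponential test function: `f(U_m)` is mean-zero and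
its mgf is bounded as for a subgaussian with parameter `1/2`, for `|t| ≤ 2`. -/
def SubeTest (m : ℕ) (f : (Fin m → Bool) → ℝ) : Prop :=
  (∑ x, ((2 : ℝ) ^ m)⁻¹ * f x) = 0 ∧
  ∀ t : ℝ, |t| ≤ 2 → Real.log (∑ x, ((2 : ℝ) ^ m)⁻¹ * Real.exp (t * f x)) ≤ t ^ 2 / 8

/-- The subexponential distance between distributions on `{0,1}^m`. -/
noncomputable def dE (m : ℕ) (P Q : (Fin m → Bool) → ℝ) : ℝ :=
  sSup {r : ℝ | ∃ f, SubeTest m f ∧ r = ∑ x, (P x - Q x) * f x}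

/-- KL divergence (in bits) from a distribution on `{0,1}^m` to uniform. -/
noncomputable def KLu (m : ℕ) (P : (Fin m → Bool) → ℝ) : ℝ :=
  ∑ x, P x * Real.logb 2 ((2 : ℝ) ^ m * P x)

lemma sum_unif (m : ℕ) : (∑ _x : Fin m → Bool, ((2 : ℝ) ^ m)⁻¹) = 1 := by
  rw [Finset.sum_const]
  simp [Fintype.card_fun]

/-- Donsker–Varadhan (finite, vs uniform). -/
lemma dv_aux (m : ℕ) (P : (Fin m → Bool) → ℝ) (hP : IsPMF P) (g : (Fin m → Bool) → ℝ) :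
    ∑ x, P x * g x ≤ (∑ x, P x * Real.log ((2:ℝ)^m * P x)) +
      Real.log (∑ x, ((2:ℝ)^m)⁻¹ * Real.exp (g x)) := by
  set S := ∑ x, ((2:ℝ)^m)⁻¹ * Real.exp (g x) with hSdef
  have h2m : (0:ℝ) < (2:ℝ)^m := by positivity
  have hS : 0 < S := by
    apply Finset.sum_pos
    · intro x _; positivity
    · exact Finset.univ_nonempty
  have key : ∀ x, P x * g x - P x * Real.log ((2:ℝ)^m * P x) - P x * Real.log S
      ≤ ((2:ℝ)^m)⁻¹ * Real.exp (g x) / S - P x := by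
    intro x
    rcases eq_or_lt_of_le (hP.1 x) with h0 | hpos
    · rw [← h0]
      have : 0 < ((2:ℝ)^m)⁻¹ * Real.exp (g x) / S := by positivity
      simp only [zero_mul, sub_zero, zero_sub, neg_zero]
      linarith
    · have hy : (0:ℝ) < Real.exp (g x) / ((2:ℝ)^m * P x * S) := by positivity
      have hlog : Real.log (Real.exp (g x) / ((2:ℝ)^m * P x * S))
          = g x - Real.log ((2:ℝ)^m * P x) - Real.log S := by
        rw [Real.log_div (Real.exp_pos _).ne' (by positivity), Real.log_exp,
          Real.log_mul (by positivity) hS.ne']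
        ring
      have hle := Real.log_le_sub_one_of_pos hy
      have := mul_le_mul_of_nonneg_left hle (le_of_lt hpos)
      rw [hlog] at this
      have heq : P x * (Real.exp (g x) / ((2:ℝ)^m * P x * S) - 1)
          = ((2:ℝ)^m)⁻¹ * Real.exp (g x) / S - P x := by
        field_simp
      nlinarith [this, heq]
  have hsum : ∑ x, (P x * g x - P x * Real.log ((2:ℝ)^m * P x) - P x * Real.log S)
      ≤ ∑ x, (((2:ℝ)^m)⁻¹ * Real.exp (g x) / S - P x) :=
    Finset.sum_le_sum (fun x _ => key x)
  have hPS : ∑ x, P x * Real.log S = Real.log S := by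
    rw [← Finset.sum_mul, hP.2, one_mul]
  have hRHS : ∑ x, (((2:ℝ)^m)⁻¹ * Real.exp (g x) / S - P x) = 0 := by
    rw [Finset.sum_sub_distrib, hP.2, ← Finset.sum_div, ← hSdef, div_self hS.ne']
    ring
  rw [Finset.sum_sub_distrib, Finset.sum_sub_distrib, hPS, hRHS] at hsum
  linarith

theorem dE_le_of_kl (m : ℕ) (P : (Fin m → Bool) → ℝ) (hP : IsPMF P) :
    (KLu m P ≤ 1 / (2 * Real.log 2) →
      dE m P (fun _ => ((2 : ℝ) ^ m)⁻¹) ≤ Real.sqrt ((Real.log 2 / 2) * KLu m P)) ∧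
    (1 / (2 * Real.log 2) < KLu m P →
      dE m P (fun _ => ((2 : ℝ) ^ m)⁻¹) ≤ (Real.log 2 / 2) * KLu m P + 1 / 4) := by
  have hl2 : (0:ℝ) < Real.log 2 := Real.log_pos one_lt_two
  set K := Real.log 2 * KLu m P with hKdef
  have hKnat : (∑ x, P x * Real.log ((2:ℝ)^m * P x)) = K := by
    rw [hKdef, KLu, Finset.mul_sum]
    apply Finset.sum_congr rfl
    intro x _
    rw [Real.logb]
    field_simp
  -- K ≥ 0
  have hK0 : 0 ≤ K := by
    have := dv_aux m P hP (fun _ => 0)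
    simp only [mul_zero, Finset.sum_const_zero, Real.exp_zero, mul_one] at this
    rw [sum_unif, Real.log_one, add_zero, hKnat] at this
    linarith
  -- key bound on members of the set
  have hmem : ∀ r ∈ {r : ℝ | ∃ f, SubeTest m f ∧
      r = ∑ x, (P x - ((2:ℝ)^m)⁻¹) * f x}, ∀ t : ℝ, 0 < t → t ≤ 2 → r ≤ K / t + t / 8 := by
    rintro r ⟨f, hf, rfl⟩ t ht ht2
    have hU : (∑ x, ((2:ℝ)^m)⁻¹ * f x) = 0 := hf.1
    have hr : (∑ x, (P x - ((2:ℝ)^m)⁻¹) * f x) = ∑ x, P x * f x := by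
      rw [show (∑ x, (P x - ((2:ℝ)^m)⁻¹) * f x)
        = (∑ x, P x * f x) - ∑ x, ((2:ℝ)^m)⁻¹ * f x by
          rw [← Finset.sum_sub_distrib]; apply Finset.sum_congr rfl; intros; ring, hU, sub_zero]
    have hdv := dv_aux m P hP (fun x => t * f x)
    have hmgf := hf.2 t (by rw [abs_of_pos ht]; exact ht2)
    have h1 : t * ∑ x, P x * f x ≤ K + t^2/8 := by
      have : (∑ x, P x * (t * f x)) = t * ∑ x, P x * f x := by
        rw [Finset.mul_sum]; apply Finset.sum_congr rfl; intros; ring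
      rw [this, hKnat] at hdv
      linarith
    rw [hr]
    rw [div_add_div _ _ (ne_of_gt ht) (by norm_num : (8:ℝ) ≠ 0), le_div_iff₀ (by positivity)]
    nlinarith
  constructor
  · intro hKL
    have hK12 : K ≤ 1/2 := by
      rw [hKdef]
      rw [le_div_iff₀ (by positivity)] at hKL
      nlinarith
    have hb : (Real.log 2 / 2) * KLu m P = K / 2 := by rw [hKdef]; ring
    rw [hb]
    apply Real.sSup_le _ (Real.sqrt_nonneg _)
    intro r hr
    rcases eq_or_lt_of_le hK0 with h0 | hKpos
    · rw [← h0]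
      simp only [neg_zero, zero_div, Real.sqrt_zero]
      apply le_of_forall_pos_le_add
      intro ε hε
      have h8 : 0 < min ε 2 := lt_min hε (by norm_num)
      have := hmem r hr (min ε 2) h8 (min_le_right _ _)
      rw [← h0] at this
      simp only [zero_div, zero_add] at this
      have : r ≤ min ε 2 / 8 := by linarith
      have := min_le_left ε 2
      linarith
    · set s := Real.sqrt (K/2) with hs
      have hs2 : s^2 = K/2 := Real.sq_sqrt (by linarith)
      have hspos : 0 < s := Real.sqrt_pos.mpr (by linarith)
      have hshalf : s ≤ 1/2 := by nlinarith
      have hb2 := hmem r hr (4*s) (by linarith) (by linarith)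
      have : K / (4*s) + 4*s/8 = s := by
        rw [div_add_div _ _ (by positivity) (by norm_num : (8:ℝ) ≠ 0),
          div_eq_iff (by positivity)]
        nlinarith
      linarith
  · intro hKL
    have hK12 : 1/2 < K := by
      rw [hKdef]
      rw [div_lt_iff₀ (by positivity)] at hKL
      nlinarith
    have hb : (Real.log 2 / 2) * KLu m P + 1/4 = K/2 + 1/4 := by rw [hKdef]; ring
    rw [hb]
    apply Real.sSup_le _ (by linarith)
    intro r hr
    have := hmem r hr 2 (by norm_num) le_rfl
    linarith
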